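/- Let Γ be a group, G = ℤ ≀ Γ, N = ⊕_Γ ℤ. Let k ∈ ℕ and λ_1,…,λ_k ∈ Γ nontrivial, Λ = ⟨λ_1,…,λ_k⟩, and set x = Σ_{i=1}^k δ_{λ_i} − k·δ_{e_Γ} ∈ N, where δ_γ is the Kronecker delta at γ. Then cl_{G,N}(x) = intrk^Γ(Λ). -/

import Mathlib

open Finsupp
open scoped commutatorElement

/-- The multiplicative group structure that older Mathlib put on `AddAut M` (composition). -/
instance AddAut.instGroupOld {M : Type*} [Add M] : Group (AddAut M) where
  mul g h := AddEquiv.trans h g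
  one := AddEquiv.refl _
  inv := AddEquiv.symm
  mul_assoc _ _ _ := rfl
  one_mul _ := rfl
  mul_one _ := rfl
  inv_mul_cancel := AddEquiv.self_trans_symm

@[simp]
theorem AddAut.mul_apply_old {M : Type*} [Add M] (e₁ e₂ : AddAut M) (m : M) : (e₁ * e₂) m = e₁ (e₂ m) :=
  rfl

@[simp]
theorem AddAut.one_apply_old {M : Type*} [Add M] (m : M) : (1 : AddAut M) m = m :=
  rfl

variable (A : Type*) [AddCommGroup A] (Γ : Type*) [Group Γ]

/-- The shift action of `Γ` on `⊕_Γ A`: `(γ • u) x = u (γ⁻¹ * x)`. -/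
noncomputable def shiftHom : Γ →* AddAut (Γ →₀ A) where
  toFun γ := (Finsupp.domCongr (Equiv.mulLeft γ) : (Γ →₀ A) ≃+ (Γ →₀ A))
  map_one' := by
    apply AddEquiv.ext; intro f; ext a
    simp [Finsupp.domCongr_apply, Finsupp.equivMapDomain_apply]
    rfl
  map_mul' γ γ' := by
    apply AddEquiv.ext; intro f; ext a
    simp [AddAut.mul_apply, Finsupp.domCongr_apply, Finsupp.equivMapDomain_apply, Equiv.Perm.mul_apply, mul_assoc]
    rfl

/-- The action of `Γ` on `Multiplicative (⊕_Γ A)` used to build the wreath product. -/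
noncomputable def wreathφ : Γ →* MulAut (Multiplicative (Γ →₀ A)) where
  toFun γ := AddEquiv.toMultiplicative (shiftHom A Γ γ)
  map_one' := by ext x; simp
  map_mul' γ γ' := by ext x; simp

/-- The restricted wreath product `A ≀ Γ = (⊕_Γ A) ⋊ Γ`. -/
noncomputable abbrev Wreath := SemidirectProduct (Multiplicative (Γ →₀ A)) Γ (wreathφ A Γ)

/-- The mixed commutator length `cl_{G,N}` (∞ if not a product of mixed commutators). -/
noncomputable def clGN {G : Type*} [Group G] (N : Subgroup G) (x : G) : ℕ∞ :=
  sInf {n : ℕ∞ | ∃ k : ℕ, n = k ∧ ∃ g v : Fin k → G, (∀ i, v i ∈ N) ∧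
    x = (List.ofFn fun i => ⁅g i, v i⁆).prod}

/-- The rank of a subgroup: minimal size of a generating set. -/
noncomputable def rk {G : Type*} [Group G] (H : Subgroup G) : ℕ∞ :=
  sInf {n : ℕ∞ | ∃ S : Finset G, Subgroup.closure (S : Set G) = H ∧ n = S.card}

/-- The intermediate rank `intrk^Γ(Λ) = inf {rk Θ | Λ ≤ Θ ≤ Γ}`. -/
noncomputable def intrk {G : Type*} [Group G] (Λ : Subgroup G) : ℕ∞ :=
  sInf {n : ℕ∞ | ∃ Θ : Subgroup G, Λ ≤ Θ ∧ n = rk Θ}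

/-- The general rank in the sense of Malcev. -/
noncomputable def genrk (G : Type*) [Group G] : ℕ∞ :=
  sSup {n : ℕ∞ | ∃ Λ : Subgroup G, Λ.FG ∧ n = intrk Λ}

/-- The special rank in the sense of Malcev. -/
noncomputable def sperk (G : Type*) [Group G] : ℕ∞ :=
  sSup {n : ℕ∞ | ∃ Λ : Subgroup G, Λ.FG ∧ n = rk Λ}

section AuxProof

variable {Γ : Type*} [Group Γ]

/-- Right-translation on `Γ →₀ ℤ`. -/
noncomputable def rshift (γ : Γ) : (Γ →₀ ℤ) ≃+ (Γ →₀ ℤ) :=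
  Finsupp.domCongr (Equiv.mulRight γ)

lemma shift_single (γ a : Γ) (b : ℤ) :
    shiftHom ℤ Γ γ (single a b) = single (γ * a) b := by
  show equivMapDomain (Equiv.mulLeft γ) (single a b) = _
  simp [Finsupp.equivMapDomain_single]

lemma rshift_single (γ a : Γ) (b : ℤ) : rshift γ (single a b) = single (a * γ) b := by
  simp [rshift, Finsupp.domCongr_apply, Finsupp.equivMapDomain_single]

lemma rshift_shift (γ s : Γ) (w : Γ →₀ ℤ) :
    rshift γ (shiftHom ℤ Γ s w) = shiftHom ℤ Γ s (rshift γ w) := by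
  show rshift γ (equivMapDomain (Equiv.mulLeft s) w)
      = equivMapDomain (Equiv.mulLeft s) (rshift γ w)
  ext a
  simp [rshift, Finsupp.domCongr_apply, Finsupp.equivMapDomain_apply, mul_assoc]

/-- The set of elements representable as `∑ᵢ (sᵢ·wᵢ - wᵢ)`. -/
def Trep (n : ℕ) (s : Fin n → Γ) : Set (Γ →₀ ℤ) :=
  {y | ∃ w : Fin n → Γ →₀ ℤ, y = ∑ i, (shiftHom ℤ Γ (s i) (w i) - w i)}

lemma Trep.zero {n : ℕ} {s : Fin n → Γ} : (0 : Γ →₀ ℤ) ∈ Trep n s :=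
  ⟨0, by simp⟩

lemma Trep.add {n : ℕ} {s : Fin n → Γ} {y z : Γ →₀ ℤ}
    (hy : y ∈ Trep n s) (hz : z ∈ Trep n s) : y + z ∈ Trep n s := by
  obtain ⟨w, rfl⟩ := hy; obtain ⟨u, rfl⟩ := hz
  refine ⟨w + u, ?_⟩
  rw [← Finset.sum_add_distrib]
  refine Finset.sum_congr rfl fun i _ => ?_
  simp only [Pi.add_apply, map_add]
  abel

lemma Trep.neg {n : ℕ} {s : Fin n → Γ} {y : Γ →₀ ℤ}
    (hy : y ∈ Trep n s) : -y ∈ Trep n s := by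
  obtain ⟨w, rfl⟩ := hy
  refine ⟨-w, ?_⟩
  rw [← Finset.sum_neg_distrib]
  refine Finset.sum_congr rfl fun i _ => ?_
  simp only [Pi.neg_apply, map_neg]
  abel

lemma Trep.rshift_mem {n : ℕ} {s : Fin n → Γ} {y : Γ →₀ ℤ} (γ : Γ)
    (hy : y ∈ Trep n s) : rshift γ y ∈ Trep n s := by
  obtain ⟨w, rfl⟩ := hy
  refine ⟨fun i => rshift γ (w i), ?_⟩
  rw [map_sum]
  exact Finset.sum_congr rfl fun i _ => by rw [map_sub, rshift_shift]

lemma single_mem_Trep {n : ℕ} {s : Fin n → Γ} {γ : Γ}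
    (hγ : γ ∈ Subgroup.closure (Set.range s)) :
    single γ (1 : ℤ) - single (1 : Γ) (1 : ℤ) ∈ Trep n s := by
  induction hγ using Subgroup.closure_induction with
  | mem x hx =>
    obtain ⟨j, rfl⟩ := hx
    refine ⟨fun i => if i = j then single (1 : Γ) (1 : ℤ) else 0, ?_⟩
    rw [Finset.sum_eq_single j]
    · simp [shift_single]
    · intro i _ hij
      simp [hij]
    · intro h; exact absurd (Finset.mem_univ j) h
  | one => simpa using Trep.zero
  | mul x y hx hy ihx ihy =>
    have h1 : single (x * y) (1 : ℤ) - single (1 : Γ) 1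
        = rshift y (single x 1 - single (1 : Γ) 1) + (single y 1 - single (1 : Γ) 1) := by
      rw [map_sub, rshift_single, rshift_single, one_mul]
      abel
    rw [h1]
    exact Trep.add (Trep.rshift_mem y ihx) ihy
  | inv x hx ihx =>
    have h1 : single x⁻¹ (1 : ℤ) - single (1 : Γ) 1
        = -(rshift x⁻¹ (single x 1 - single (1 : Γ) 1)) := by
      rw [map_sub, rshift_single, rshift_single, one_mul, mul_inv_cancel]
      abel
    rw [h1]
    exact Trep.neg (Trep.rshift_mem x⁻¹ ihx)

lemma comm_inl (g : Wreath ℤ Γ) (m : Multiplicative (Γ →₀ ℤ)) :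
    ⁅g, (SemidirectProduct.inl m : Wreath ℤ Γ)⁆
      = SemidirectProduct.inl ((wreathφ ℤ Γ g.right) m * m⁻¹) := by
  apply SemidirectProduct.ext
  · simp only [commutatorElement_def, SemidirectProduct.mul_left, SemidirectProduct.mul_right,
      SemidirectProduct.inv_left, SemidirectProduct.inv_right, SemidirectProduct.left_inl,
      SemidirectProduct.right_inl, map_one, map_mul, map_inv, MulEquiv.apply_symm_apply,
      mul_one, one_mul, MulAut.one_apply, mul_inv_rev, inv_inv]
    try rw [mul_left_comm, mul_inv_cancel_left]
    try simp [mul_comm, mul_left_comm, mul_assoc]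
  · simp [commutatorElement_def]

lemma inl_prod (n : ℕ) (c : Fin n → Multiplicative (Γ →₀ ℤ)) :
    (List.ofFn fun i => (SemidirectProduct.inl (c i) : Wreath ℤ Γ)).prod
      = SemidirectProduct.inl (∏ i, c i) := by
  have h1 : (List.ofFn fun i => (SemidirectProduct.inl (c i) : Wreath ℤ Γ))
      = List.map SemidirectProduct.inl (List.ofFn c) := by
    rw [List.map_ofFn]; rfl
  rw [h1, ← map_list_prod, List.prod_ofFn]

/-- Lower bound: any representation forces membership of the `ls i` in the
subgroup generated by the twisting elements. -/
lemma mem_of_rep {n : ℕ} (γf : Fin n → Γ) (w : Fin n → Γ →₀ ℤ) {k : ℕ} (ls : Fin k → Γ)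
    (h : (∑ i, single (ls i) (1 : ℤ)) - (k : ℤ) • single (1 : Γ) (1 : ℤ)
        = ∑ j, (shiftHom ℤ Γ (γf j) (w j) - w j)) :
    ∀ i, ls i ∈ Subgroup.closure (Set.range γf) := by
  classical
  set Θ := Subgroup.closure (Set.range γf) with hΘ
  set q : Γ → Γ ⧸ Θ := fun a => ((a⁻¹ : Γ) : Γ ⧸ Θ) with hq
  set F : (Γ →₀ ℤ) →+ (Γ ⧸ Θ →₀ ℤ) := mapDomain.addMonoidHom q with hF
  have hshift : ∀ (j : Fin n) (u : Γ →₀ ℤ), F (shiftHom ℤ Γ (γf j) u) = F u := by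
    intro j u
    have hg : γf j ∈ Θ := Subgroup.subset_closure (Set.mem_range_self j)
    show mapDomain q (equivMapDomain (Equiv.mulLeft (γf j)) u) = mapDomain q u
    rw [Finsupp.equivMapDomain_eq_mapDomain, ← Finsupp.mapDomain_comp]
    congr 1
    funext a
    show ((((γf j) * a)⁻¹ : Γ) : Γ ⧸ Θ) = ((a⁻¹ : Γ) : Γ ⧸ Θ)
    rw [mul_inv_rev]
    exact QuotientGroup.mk_mul_of_mem a⁻¹ (inv_mem hg)
  have hF0 : F ((∑ i, single (ls i) (1 : ℤ)) - (k : ℤ) • single (1 : Γ) (1 : ℤ)) = 0 := by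
    rw [h, map_sum]
    refine Finset.sum_eq_zero fun j _ => ?_
    rw [map_sub, hshift, sub_self]
  have hFx : (∑ i, single (q (ls i)) (1 : ℤ)) - (k : ℤ) • single (q 1) (1 : ℤ) = 0 := by
    rw [← hF0, map_sub, map_zsmul, map_sum]
    congr 1
    · exact Finset.sum_congr rfl fun i _ => by
        show single (q (ls i)) 1 = mapDomain q (single (ls i) 1)
        rw [Finsupp.mapDomain_single]
    · congr 1
      show single (q 1) 1 = mapDomain q (single 1 1)
      rw [Finsupp.mapDomain_single]
  intro i
  by_contra hnot
  have heval := DFunLike.congr_fun hFx (q (ls i))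
  rw [Finsupp.sub_apply, Finsupp.smul_apply, Finsupp.finset_sum_apply, Finsupp.coe_zero,
    Pi.zero_apply] at heval
  have h2 : single (q 1) (1 : ℤ) (q (ls i)) = 0 := by
    rw [Finsupp.single_apply, if_neg]
    intro hc
    apply hnot
    have : ((1 : Γ) : Γ ⧸ Θ) = (((ls i)⁻¹ : Γ) : Γ ⧸ Θ) := by simpa [hq] using hc
    rw [QuotientGroup.eq] at this
    simpa using this
  have h3 : (0 : ℤ) < ∑ i', (single (q (ls i')) (1 : ℤ)) (q (ls i)) := by
    refine Finset.sum_pos' (fun i' _ => ?_) ⟨i, Finset.mem_univ i, ?_⟩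
    · rw [Finsupp.single_apply]; split <;> norm_num
    · simp [Finsupp.single_apply]
  rw [h2] at heval
  simp only [smul_zero, sub_zero] at heval
  exact h3.ne' heval

end AuxProof

section MainAux

variable {Γ : Type*} [Group Γ]

lemma Trep.sum {n : ℕ} {s : Fin n → Γ} {ι : Type*} (t : Finset ι) (f : ι → Γ →₀ ℤ)
    (hf : ∀ i ∈ t, f i ∈ Trep n s) : (∑ i ∈ t, f i) ∈ Trep n s := by
  classical
  induction t using Finset.induction_on with
  | empty => simpa using Trep.zero
  | insert _ _ hnot ih =>
    rw [Finset.sum_insert hnot]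
    exact Trep.add (hf _ (Finset.mem_insert_self _ _))
      (ih fun i hi => hf i (Finset.mem_insert_of_mem hi))

lemma xadd_sum (k : ℕ) (ls : Fin k → Γ) :
    (∑ i, Finsupp.single (ls i) (1 : ℤ)) - (k : ℤ) • Finsupp.single (1 : Γ) (1 : ℤ)
      = ∑ i, (Finsupp.single (ls i) (1 : ℤ) - Finsupp.single (1 : Γ) (1 : ℤ)) := by
  rw [Finset.sum_sub_distrib]
  congr 1
  rw [Finset.sum_const, Finset.card_univ, Fintype.card_fin, natCast_zsmul]

end MainAux

/-- exact value of the mixed commutator length of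
`Σ δ_{λᵢ} - k δ_e` in `ℤ ≀ Γ`. -/
theorem clGN_eq_intrk {Γ : Type*} [Group Γ] (k : ℕ) (hk : 0 < k) (ls : Fin k → Γ)
    (hls : ∀ i, ls i ≠ 1) :
    clGN (SemidirectProduct.inl : Multiplicative (Γ →₀ ℤ) →* Wreath ℤ Γ).range
        (SemidirectProduct.inl (Multiplicative.ofAdd
          ((∑ i, Finsupp.single (ls i) (1 : ℤ)) - (k : ℤ) • Finsupp.single (1 : Γ) (1 : ℤ)))) =
      intrk (Subgroup.closure (Set.range ls)) := by
  classical
  apply le_antisymm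
  · -- clGN ≤ intrk
    refine le_sInf fun b hb => ?_
    obtain ⟨Θ, hΛΘ, rfl⟩ := hb
    refine le_sInf fun bm hm => ?_
    obtain ⟨S, hSΘ, rfl⟩ := hm
    set n := S.card with hn
    set s : Fin n → Γ := fun i => ((S.equivFin.symm i : Γ)) with hs
    have hrange : Set.range s = (S : Set Γ) := by
      ext a
      constructor
      · rintro ⟨i, rfl⟩; exact (S.equivFin.symm i).2
      · intro ha; exact ⟨S.equivFin ⟨a, ha⟩, by simp [hs]⟩
    have hxT : ((∑ i, Finsupp.single (ls i) (1 : ℤ))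
        - (k : ℤ) • Finsupp.single (1 : Γ) (1 : ℤ)) ∈ Trep n s := by
      rw [xadd_sum]
      refine Trep.sum _ _ fun i _ => ?_
      refine single_mem_Trep ?_
      rw [hrange, hSΘ]
      exact hΛΘ (Subgroup.subset_closure (Set.mem_range_self i))
    obtain ⟨w, hw⟩ := hxT
    set g : Fin n → Wreath ℤ Γ := fun i => SemidirectProduct.inr (s i) with hg
    set v : Fin n → Wreath ℤ Γ :=
      fun i => SemidirectProduct.inl (Multiplicative.ofAdd (w i)) with hv
    have hcomm : ∀ i, ⁅g i, v i⁆
        = (SemidirectProduct.inl (Multiplicative.ofAdd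
            (shiftHom ℤ Γ (s i) (w i) - w i)) : Wreath ℤ Γ) := by
      intro i
      rw [hg, hv, comm_inl]
      congr 1
      rw [sub_eq_add_neg, ofAdd_add, ofAdd_neg]
      rw [SemidirectProduct.right_inr]
      rfl
    refine sInf_le ⟨n, rfl, g, v, fun i => ⟨Multiplicative.ofAdd (w i), rfl⟩, ?_⟩
    simp only [hcomm]
    rw [inl_prod, ← ofAdd_sum, ← hw]
  · -- intrk ≤ clGN
    refine le_sInf fun b hb => ?_
    obtain ⟨n, rfl, g, v, hvmem, hprod⟩ := hb
    choose m hm using hvmem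
    have hcomm : ∀ i, ⁅g i, v i⁆
        = (SemidirectProduct.inl (Multiplicative.ofAdd
            (shiftHom ℤ Γ ((g i).right) ((m i).toAdd) - (m i).toAdd)) : Wreath ℤ Γ) := by
      intro i
      rw [← hm i, comm_inl]
      congr 1
      rw [sub_eq_add_neg, ofAdd_add, ofAdd_neg, ofAdd_toAdd]
      rfl
    have hinj : Multiplicative.ofAdd
        ((∑ i, Finsupp.single (ls i) (1 : ℤ)) - (k : ℤ) • Finsupp.single (1 : Γ) (1 : ℤ))
        = Multiplicative.ofAdd
          (∑ i, (shiftHom ℤ Γ ((g i).right) ((m i).toAdd) - (m i).toAdd)) := by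
      apply SemidirectProduct.inl_injective (φ := wreathφ ℤ Γ)
      rw [hprod]
      simp only [hcomm]
      rw [inl_prod, ← ofAdd_sum]
    have hxe : (∑ i, Finsupp.single (ls i) (1 : ℤ))
        - (k : ℤ) • Finsupp.single (1 : Γ) (1 : ℤ)
        = ∑ i, (shiftHom ℤ Γ ((g i).right) ((m i).toAdd) - (m i).toAdd) :=
      Multiplicative.ofAdd.injective hinj
    have hmem := mem_of_rep (fun i => (g i).right) (fun i => (m i).toAdd) ls hxe
    set Θ := Subgroup.closure (Set.range fun i => (g i).right) with hΘ
    have hΛΘ : Subgroup.closure (Set.range ls) ≤ Θ := by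
      rw [Subgroup.closure_le]
      rintro a ⟨i, rfl⟩
      exact hmem i
    refine le_trans (sInf_le ⟨Θ, hΛΘ, rfl⟩) ?_
    have hrk : rk Θ ≤ ((Finset.image (fun i => (g i).right) Finset.univ).card : ℕ∞) := by
      refine sInf_le ⟨Finset.image (fun i => (g i).right) Finset.univ, ?_, rfl⟩
      rw [Finset.coe_image, Finset.coe_univ, Set.image_univ, hΘ]
    refine le_trans hrk ?_
    exact_mod_cast le_trans Finset.card_image_le (le_of_eq (by simp))
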